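/- Let G' be obtained from G by subdividing every edge twice (replacing each edge by a path of length three). If v_{e_{i-1}}, v_{e_i}, v_{e_{i+1}} are three successive vertices on a Hamiltonian cycle of the line graph L(G'), then the edges e_{i-1}, e_i, e_{i+1} of G' cannot all be incident to a common vertex u belonging to the original vertex set V(G). -/

import Mathlib

open SimpleGraph

/-- The smaller endpoint of an edge (under a fixed linear order on the vertices). -/
def Sym2.emin {V : Type} [LinearOrder V] (e : Sym2 V) : V :=
  Sym2.lift ⟨min, fun _ _ => min_comm _ _⟩ e

/-- The larger endpoint of an edge. -/
def Sym2.emax {V : Type} [LinearOrder V] (e : Sym2 V) : V :=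
  Sym2.lift ⟨max, fun _ _ => max_comm _ _⟩ e

/-- Base relation for the graph `G'` obtained from `G` by replacing every edge
`e = (u,v)` by the path `u - x_e - y_e - v`: the new vertices are pairs `(e, b)`
where `(e, false)` is `x_e` (attached to the smaller endpoint of `e`) and
`(e, true)` is `y_e` (attached to the larger endpoint). -/
def subdivRel {V : Type} [LinearOrder V] (G : SimpleGraph V) :
    (V ⊕ (G.edgeSet × Bool)) → (V ⊕ (G.edgeSet × Bool)) → Prop
  | Sum.inl u, Sum.inr (e, b) => b = false ∧ u = Sym2.emin (e : Sym2 V)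
  | Sum.inr (e, b), Sum.inl v => b = true ∧ v = Sym2.emax (e : Sym2 V)
  | Sum.inr (e, b), Sum.inr (e', b') => (e : Sym2 V) = (e' : Sym2 V) ∧ b = false ∧ b' = true
  | _, _ => False

/-- The graph obtained from `G` by subdividing every edge twice
(replacing each edge by a path of length three). -/
def subdiv2 {V : Type} [LinearOrder V] (G : SimpleGraph V) :
    SimpleGraph (V ⊕ (G.edgeSet × Bool)) :=
  SimpleGraph.fromRel (subdivRel G)

/-- unique-element split lemma -/
lemma listU {α : Type*} [DecidableEq α] {a : α} :
    ∀ (l₁ : List α) {l₂ r₁ r₂ : List α},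
      l₁ ++ a :: r₁ = l₂ ++ a :: r₂ → (l₁ ++ a :: r₁).count a = 1 →
      l₁ = l₂ ∧ r₁ = r₂
  | [], l₂, r₁, r₂, heq, hcnt => by
    cases l₂ with
    | nil => simpa using heq
    | cons b l₂' =>
      exfalso
      simp only [List.nil_append, List.cons_append] at heq
      obtain ⟨rfl, hr⟩ := List.cons_eq_cons.mp heq
      simp [hr, List.count_append] at hcnt
  | b :: l₁', l₂, r₁, r₂, heq, hcnt => by
    cases l₂ with
    | nil =>
      exfalso
      simp only [List.nil_append, List.cons_append] at heq
      obtain ⟨rfl, hr⟩ := List.cons_eq_cons.mp heq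
      simp [← hr, List.count_append] at hcnt
    | cons c l₂' =>
      simp only [List.cons_append] at heq
      obtain ⟨rfl, hr⟩ := List.cons_eq_cons.mp heq
      have hb : b ≠ a := by
        rintro rfl
        simp [List.count_cons, List.count_append] at hcnt
      have := listU l₁' hr (by
        rwa [List.cons_append, List.count_cons_of_ne hb] at hcnt)
      exact ⟨by rw [this.1], this.2⟩

/-- An edge of a walk appears as consecutive entries of the support. -/
lemma walkW1 {V : Type*} {G : SimpleGraph V} {u v : V} (p : G.Walk u v) {a b : V}
    (h : s(a,b) ∈ p.edges) :
    ∃ l₁ l₂, p.support = l₁ ++ a :: b :: l₂ ∨ p.support = l₁ ++ b :: a :: l₂ := by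
  induction p with
  | nil => simp at h
  | cons hadj q ih =>
    rename_i w w' w''
    rw [SimpleGraph.Walk.edges_cons, List.mem_cons] at h
    rcases h with h | h
    · refine ⟨[], q.support.tail, ?_⟩
      rw [Sym2.eq_iff] at h
      rcases h with ⟨rfl, rfl⟩ | ⟨rfl, rfl⟩
      · left
        rw [SimpleGraph.Walk.support_cons, q.support_eq_cons]
        simp
      · right
        rw [SimpleGraph.Walk.support_cons, q.support_eq_cons]
        simp
    · obtain ⟨m₁, m₂, hm⟩ := ih h
      exact ⟨w :: m₁, m₂, by rcases hm with hm | hm <;> [left; right] <;>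
        simp [SimpleGraph.Walk.support_cons, hm]⟩


section nbr
variable {V : Type} [LinearOrder V] {G : SimpleGraph V}

/-- neighbors of a subdivision vertex -/
lemma subdiv2_nbr {e : G.edgeSet} {b : Bool} {r : V ⊕ (G.edgeSet × Bool)}
    (h : (subdiv2 G).Adj (Sum.inr (e, b)) r) :
    r = Sum.inr (e, !b) ∨ (b = false ∧ r = Sum.inl (Sym2.emin (e : Sym2 V)))
      ∨ (b = true ∧ r = Sum.inl (Sym2.emax (e : Sym2 V))) := by
  rw [subdiv2, SimpleGraph.fromRel_adj] at h
  obtain ⟨hne, h | h⟩ := h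
  · match r, h with
    | Sum.inl v, ⟨hb, hv⟩ => exact Or.inr (Or.inr ⟨hb, by rw [hv]⟩)
    | Sum.inr (e', b'), ⟨he, hb, hb'⟩ =>
      exact Or.inl (by rw [hb, hb', Subtype.ext he]; rfl)
  · match r, h with
    | Sum.inl v, ⟨hb, hv⟩ => exact Or.inr (Or.inl ⟨hb, by rw [hv]⟩)
    | Sum.inr (e', b'), ⟨he, hb', hb⟩ =>
      exact Or.inl (by rw [hb, hb', Subtype.ext he.symm]; rfl)

lemma subdiv2_inl_nbr {u : V} {r : V ⊕ (G.edgeSet × Bool)}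
    (h : (subdiv2 G).Adj (Sum.inl u) r) :
    ∃ (e : G.edgeSet) (b : Bool), r = Sum.inr (e, b) ∧
      ((b = false ∧ u = Sym2.emin (e : Sym2 V)) ∨ (b = true ∧ u = Sym2.emax (e : Sym2 V))) := by
  rw [subdiv2, SimpleGraph.fromRel_adj] at h
  obtain ⟨hne, h | h⟩ := h
  · match r, h with
    | Sum.inr (e, b), ⟨hb, hv⟩ => exact ⟨e, b, rfl, Or.inl ⟨hb, hv⟩⟩
  · match r, h with
    | Sum.inr (e, b), ⟨hb, hv⟩ => exact ⟨e, b, rfl, Or.inr ⟨hb, hv⟩⟩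

end nbr


open Classical in
/-- if `v_{e₁}, v_{e₂}, v_{e₃}` are three successive vertices on a
Hamiltonian cycle of the line graph of the twice-subdivided graph `G'`, then the
corresponding edges `e₁, e₂, e₃` of `G'` cannot all be incident to a common vertex
`u` belonging to the original vertex set `V(G)`. -/
theorem successive_hamCycle_vertices_not_common_original_vertex
    {V : Type} [LinearOrder V] (G : SimpleGraph V)
    {x : (subdiv2 G).edgeSet} (c : (subdiv2 G).lineGraph.Walk x x)
    (hc : c.IsHamiltonianCycle)
    (l₁ l₂ : List (subdiv2 G).edgeSet) (e₁ e₂ e₃ : (subdiv2 G).edgeSet)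
    (hsup : c.support = l₁ ++ e₁ :: e₂ :: e₃ :: l₂) :
    ¬ ∃ u : V, (Sum.inl u ∈ (e₁ : Sym2 (V ⊕ (G.edgeSet × Bool)))) ∧
        (Sum.inl u ∈ (e₂ : Sym2 (V ⊕ (G.edgeSet × Bool)))) ∧
        (Sum.inl u ∈ (e₃ : Sym2 (V ⊕ (G.edgeSet × Bool)))) := by
  rintro ⟨u, h1, h2, h3⟩
  -- the other endpoint of e₂
  obtain ⟨w, hw⟩ := Sym2.mem_iff_exists.mp h2
  have hadj : (subdiv2 G).Adj (Sum.inl u) w := by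
    rw [← SimpleGraph.mem_edgeSet, ← hw]; exact e₂.2
  obtain ⟨e0, b0, rfl, hub⟩ := subdiv2_inl_nbr hadj
  set y : V ⊕ (G.edgeSet × Bool) := Sum.inr (e0, !b0) with hy
  have hfadj : (subdiv2 G).Adj (Sum.inr (e0, b0)) y := by
    rw [subdiv2, SimpleGraph.fromRel_adj]
    refine ⟨by simp [hy], ?_⟩
    cases b0
    · exact Or.inl ⟨rfl, rfl, rfl⟩
    · exact Or.inr ⟨rfl, rfl, rfl⟩
  set f : (subdiv2 G).edgeSet :=
    ⟨s(Sum.inr (e0, b0), y), (subdiv2 G).mem_edgeSet.mpr hfadj⟩ with hf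
  have hgadj : (subdiv2 G).Adj y
      (Sum.inl (if b0 then Sym2.emin (e0 : Sym2 V) else Sym2.emax (e0 : Sym2 V))) := by
    rw [subdiv2, SimpleGraph.fromRel_adj]
    refine ⟨by simp [hy], ?_⟩
    cases b0
    · exact Or.inl ⟨rfl, by simp⟩
    · exact Or.inr ⟨rfl, by simp⟩
  set gE : (subdiv2 G).edgeSet :=
    ⟨s(y, Sum.inl (if b0 then Sym2.emin (e0 : Sym2 V) else Sym2.emax (e0 : Sym2 V))),
      (subdiv2 G).mem_edgeSet.mpr hgadj⟩ with hg
  -- e₂ as s(inl u, inr (e0,b0))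
  have hinl_notin_f : Sum.inl u ∉ (f : Sym2 (V ⊕ (G.edgeSet × Bool))) := by
    simp [hf, hy]
  -- neighbor characterization of f in the line graph
  have hN : ∀ d : (subdiv2 G).edgeSet, (subdiv2 G).lineGraph.Adj f d → d = e₂ ∨ d = gE := by
    intro d hd
    rw [SimpleGraph.lineGraph_adj_iff_exists] at hd
    obtain ⟨hne, z, hzf, hzd⟩ := hd
    obtain ⟨r, hr⟩ := Sym2.mem_iff_exists.mp hzd
    have hradj : (subdiv2 G).Adj z r := by
      rw [← SimpleGraph.mem_edgeSet, ← hr]; exact d.2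
    have hzf' : z = Sum.inr (e0, b0) ∨ z = y := by
      simpa [hf] using hzf
    rcases hzf' with rfl | rfl
    · -- z is the x-vertex; neighbors: y (gives f) or inl u (gives e₂)
      rcases subdiv2_nbr hradj with hrr | ⟨hb, hrr⟩ | ⟨hb, hrr⟩
      · exact absurd (Subtype.ext (by rw [hr, hrr]; try rfl)) hne
      · left
        apply Subtype.ext
        rw [hr, hrr, hw]
        rcases hub with ⟨hb0, hu⟩ | ⟨hb0, hu⟩
        · rw [hu]; exact Sym2.eq_swap
        · rw [hb0] at hb; simp at hb
      · left
        apply Subtype.ext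
        rw [hr, hrr, hw]
        rcases hub with ⟨hb0, hu⟩ | ⟨hb0, hu⟩
        · rw [hb0] at hb; simp at hb
        · rw [hu]; exact Sym2.eq_swap
    · -- z = y; neighbors: x-vertex (gives f) or the far endpoint (gives gE)
      rcases subdiv2_nbr hradj with hrr | ⟨hb, hrr⟩ | ⟨hb, hrr⟩
      · refine absurd (Subtype.ext ?_) hne
        rw [hr, hrr]
        simp only [hf, Bool.not_not, Sym2.eq_swap]
      · right
        apply Subtype.ext
        rw [hr, hrr]
        show s(y, Sum.inl (Sym2.emin (e0 : Sym2 V))) =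
          s(y, Sum.inl (if b0 = true then Sym2.emin (e0 : Sym2 V) else Sym2.emax (e0 : Sym2 V)))
        have hb0 : b0 = true := by cases b0 <;> simp_all
        rw [if_pos hb0]
      · right
        apply Subtype.ext
        rw [hr, hrr]
        show s(y, Sum.inl (Sym2.emax (e0 : Sym2 V))) =
          s(y, Sum.inl (if b0 = true then Sym2.emin (e0 : Sym2 V) else Sym2.emax (e0 : Sym2 V)))
        have hb0 : b0 = false := by cases b0 <;> simp_all
        rw [if_neg (by simp [hb0])]
  -- rotate the cycle to start at f
  have hf_mem : f ∈ c.support := hc.mem_support f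
  set c' := c.rotate f hf_mem with hc'def
  have hcyc' : c'.IsCycle := hc.isCycle.rotate hf_mem
  obtain ⟨d₁, had₁, q, hq⟩ := SimpleGraph.Walk.not_nil_iff.mp hcyc'.not_nil
  have hE1 : c'.edges = s(f, d₁) :: q.edges := by
    rw [hq, SimpleGraph.Walk.edges_cons]
  have hrevnn : ¬ c'.reverse.Nil := by
    rw [SimpleGraph.Walk.not_nil_iff_lt_length, SimpleGraph.Walk.length_reverse]
    exact SimpleGraph.Walk.not_nil_iff_lt_length.mp hcyc'.not_nil
  obtain ⟨d₂, had₂, q₂, hq₂⟩ := SimpleGraph.Walk.not_nil_iff.mp hrevnn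
  have hE2 : c'.edges = q₂.edges.reverse ++ [s(f, d₂)] := by
    have h := SimpleGraph.Walk.edges_reverse c'
    rw [hq₂, SimpleGraph.Walk.edges_cons] at h
    have h2 := congrArg List.reverse h
    rw [List.reverse_reverse, List.reverse_cons] at h2
    exact h2.symm
  have hnodup : c'.edges.Nodup := hcyc'.isCircuit.isTrail.edges_nodup
  have hlen : 3 ≤ c'.edges.length := by
    rw [SimpleGraph.Walk.length_edges]; exact hcyc'.three_le_length
  have hd12 : d₁ ≠ d₂ := by
    rintro rfl
    cases hrev : q₂.edges.reverse with
    | nil => rw [hE2, hrev] at hlen; simp at hlen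
    | cons hd tl =>
      have h12 : s(f, d₁) :: q.edges = hd :: (tl ++ [s(f, d₁)]) := by
        rw [← hE1, hE2, hrev]; simp
      obtain ⟨hh, ht⟩ := List.cons_eq_cons.mp h12
      have hmemq : s(f, d₁) ∈ q.edges := by rw [ht]; simp
      rw [hE1] at hnodup
      exact (List.nodup_cons.mp hnodup).1 hmemq
  have hmem' : s(f, e₂) ∈ c'.edges := by
    rcases hN d₁ had₁ with rfl | rfl
    · rw [hE1]; exact List.mem_cons_self
    · rcases hN d₂ had₂ with rfl | rfl
      · rw [hE2]; simp
      · exact absurd rfl hd12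
  have hmemc : s(f, e₂) ∈ c.edges :=
    ((SimpleGraph.Walk.rotate_edges c f hf_mem).perm.mem_iff).mp hmem'
  -- e₂ is not the basepoint x
  have hsup' : c.support = (l₁ ++ [e₁]) ++ e₂ :: (e₃ :: l₂) := by rw [hsup]; simp
  have hxe2 : x ≠ e₂ := by
    rintro rfl
    have h2cnt : c.support.count x = 2 := by convert hc.count_support_self
    have hfront : x ∈ l₁ ++ [e₁] := by
      have hcons := c.support_eq_cons
      rw [hsup'] at hcons
      obtain ⟨h0, t0, ht0⟩ := List.exists_cons_of_ne_nil
        (show l₁ ++ [e₁] ≠ [] by simp) 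
      rw [ht0, List.cons_append] at hcons
      obtain ⟨rfl, -⟩ := List.cons_eq_cons.mp hcons
      rw [ht0]; exact List.mem_cons_self
    have hback : x ∈ e₃ :: l₂ := by
      have hrs := c.reverse.support_eq_cons
      rw [SimpleGraph.Walk.support_reverse, hsup'] at hrs
      rw [List.reverse_append, List.reverse_cons] at hrs
      obtain ⟨h0, t0, ht0⟩ := List.exists_cons_of_ne_nil
        (show (e₃ :: l₂ : List _).reverse ≠ [] by simp)
      rw [ht0] at hrs
      simp only [List.cons_append, List.append_assoc] at hrs
      obtain ⟨rfl, -⟩ := List.cons_eq_cons.mp hrs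
      have hmm : h0 ∈ (e₃ :: l₂ : List _).reverse := by
        rw [ht0]; exact List.mem_cons_self
      rwa [List.mem_reverse] at hmm
    have c1 : 0 < (l₁ ++ [e₁]).count x := List.count_pos_iff.mpr hfront
    have c2 : 0 < (e₃ :: l₂ : List _).count x := List.count_pos_iff.mpr hback
    rw [hsup', List.count_append, List.count_cons_self] at h2cnt
    omega
  have hcnt : c.support.count e₂ = 1 := by convert hc.support_count_of_ne hxe2
  -- locate e₂'s neighbors in the support
  obtain ⟨m₁, m₂, hm | hm⟩ := walkW1 c hmemc
  · -- support = m₁ ++ f :: e₂ :: m₂  ⇒  f = e₁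
    have hm' : c.support = (m₁ ++ [f]) ++ e₂ :: m₂ := by rw [hm]; simp
    have hU := listU (l₁ ++ [e₁]) (hsup'.symm.trans hm')
      (by rw [← hsup']; convert hcnt)
    obtain ⟨-, hfe⟩ := List.append_inj' hU.1 rfl
    have hfe1 : e₁ = f := by simpa using hfe
    exact hinl_notin_f (by rw [← hfe1]; exact h1)
  · -- support = m₁ ++ e₂ :: f :: m₂  ⇒  f = e₃
    have hU := listU (l₁ ++ [e₁]) (hsup'.symm.trans hm)
      (by rw [← hsup']; convert hcnt)
    have hfe3 : e₃ = f := by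
      have := hU.2
      exact (List.cons_eq_cons.mp this).1
    exact hinl_notin_f (by rw [← hfe3]; exact h3)
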